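/- In the GARCH(1,1) model, the upper bound ÂVaR^α_t(L_T) := κ · sqrt(a₀ Σ_{k=0}^{T-t-2} (a₁ κ₂ + b)^k + σ_{t+1}² (a₁ κ₂ + b)^{T-t-1}), where κ = (1/(1−α)) ∫_α^1 F_Z^{-1}(u) du and κ₂ = (1/(1−α)) ∫_α^1 F_{Z²}^{-1}(u) du, satisfies ÃVaR^α_t(L_T) ≤ ÂVaR^α_t(L_T) for all t = 0,…,T−1. -/

import Mathlib

open MeasureTheory ProbabilityTheory Set

/-- The distribution function of a real random variable `Z` under `μ`. -/
noncomputable def distFun {Ω : Type*} [MeasurableSpace Ω] (μ : Measure Ω) (Z : Ω → ℝ) (x : ℝ) : ℝ :=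
  (μ (Z ⁻¹' Set.Iic x)).toReal

/-- Left-continuous quantile function (generalized inverse) of a distribution function. -/
noncomputable def quantileFun (F : ℝ → ℝ) (α : ℝ) : ℝ :=
  sInf {x : ℝ | α ≤ F x}

/-- The conditional Value-at-Risk at level `α` given the sub-σ-algebra `𝔉`, realized pointwise
via the regular conditional distribution: `VaR^α_t(L)(ω) = inf {m : P(L ≤ m | 𝔉)(ω) ≥ α}`. -/
noncomputable def condVaR {Ω : Type*} (𝔉 : MeasurableSpace Ω) [mΩ : MeasurableSpace Ω]
    [StandardBorelSpace Ω] [Nonempty Ω] (μ : Measure Ω) [IsFiniteMeasure μ]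
    (α : ℝ) (L : Ω → ℝ) (ω : Ω) : ℝ :=
  sInf {m : ℝ | α ≤ ((condExpKernel μ 𝔉 ω) (L ⁻¹' Set.Iic m)).toReal}

set_option maxHeartbeats 1000000



section RealAux

lemma mySqrt_add_le {x δ : ℝ} (hx : 0 ≤ x) (hδ : 0 ≤ δ) :
    Real.sqrt (x + δ) ≤ Real.sqrt x + Real.sqrt δ := by
  have h : x + δ ≤ (Real.sqrt x + Real.sqrt δ) ^ 2 := by
    have hx' := Real.sq_sqrt hx
    have hδ' := Real.sq_sqrt hδ
    nlinarith [Real.sqrt_nonneg x, Real.sqrt_nonneg δ]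
  calc Real.sqrt (x + δ) ≤ Real.sqrt ((Real.sqrt x + Real.sqrt δ) ^ 2) := Real.sqrt_le_sqrt h
    _ = Real.sqrt x + Real.sqrt δ := Real.sqrt_sq (by positivity)

lemma mySqrt_tangent {x c : ℝ} (hx : 0 ≤ x) (hc : 0 < c) :
    Real.sqrt x ≤ (c + x) / (2 * Real.sqrt c) := by
  rw [le_div_iff₀ (by positivity)]
  have h := two_mul_le_add_sq (Real.sqrt c) (Real.sqrt x)
  rw [Real.sq_sqrt hc.le, Real.sq_sqrt hx] at h
  nlinarith [Real.sqrt_nonneg c, Real.sqrt_nonneg x]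

lemma mySqrt_le_one_add {q : ℝ} (hq : 0 ≤ q) : Real.sqrt q ≤ 1 + q := by
  have h : q ≤ (1 + q) ^ 2 := by nlinarith
  calc Real.sqrt q ≤ Real.sqrt ((1 + q) ^ 2) := Real.sqrt_le_sqrt h
    _ = 1 + q := Real.sqrt_sq (by linarith)

end RealAux

section DistAux

variable {Ω : Type*} [mΩ : MeasurableSpace Ω] (μ : Measure Ω) [IsProbabilityMeasure μ]

lemma distFun_mono (W : Ω → ℝ) : Monotone (distFun μ W) := fun x y hxy =>
  ENNReal.toReal_mono (measure_ne_top _ _)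
    (measure_mono (preimage_mono (Iic_subset_Iic.2 hxy)))

lemma distFun_nonneg (W : Ω → ℝ) (x : ℝ) : 0 ≤ distFun μ W x := ENNReal.toReal_nonneg

lemma exists_le_distFun (W : Ω → ℝ) {u : ℝ} (hu : u < 1) : ∃ x : ℝ, u ≤ distFun μ W x := by
  have hmono : Monotone (fun n : ℕ => W ⁻¹' Iic (n : ℝ)) := by
    intro i j hij
    exact preimage_mono (Iic_subset_Iic.2 (by exact_mod_cast hij))
  have hU : (⋃ n : ℕ, W ⁻¹' Iic (n : ℝ)) = univ := by
    ext ω; simp only [mem_iUnion, mem_preimage, mem_Iic, mem_univ, iff_true]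
    exact exists_nat_ge (W ω)
  have h1 := tendsto_measure_iUnion_atTop (μ := μ) hmono
  rw [hU, measure_univ] at h1
  have h2 : Filter.Tendsto (fun n : ℕ => distFun μ W (n : ℝ)) Filter.atTop (nhds 1) := by
    have := (ENNReal.tendsto_toReal (by norm_num : (1 : ENNReal) ≠ ⊤)).comp h1
    simpa [distFun, Function.comp_def] using this
  obtain ⟨n, hn⟩ := (h2.eventually (eventually_gt_nhds hu)).exists
  exact ⟨n, hn.le⟩

lemma le_distFun_quantileFun (W : Ω → ℝ) (hW : Measurable W) {u : ℝ}
    (hne : {x : ℝ | u ≤ distFun μ W x}.Nonempty)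
    (hbdd : BddBelow {x : ℝ | u ≤ distFun μ W x}) :
    u ≤ distFun μ W (quantileFun (distFun μ W) u) := by
  set c := quantileFun (distFun μ W) u with hc
  -- for every n, u ≤ F (c + 1/(n+1))
  have key : ∀ n : ℕ, ENNReal.ofReal u ≤ μ (W ⁻¹' Iic (c + 1 / (n + 1))) := by
    intro n
    have hlt : sInf {x : ℝ | u ≤ distFun μ W x} < c + 1 / (n + 1) := by
      have hceq : sInf {x : ℝ | u ≤ distFun μ W x} = c := rfl
      rw [hceq]
      have : (0:ℝ) < 1 / ((n:ℝ) + 1) := by positivity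
      linarith
    obtain ⟨x, hx, hxlt⟩ := exists_lt_of_csInf_lt hne hlt
    have : u ≤ distFun μ W (c + 1 / (n + 1)) := le_trans hx (distFun_mono μ W hxlt.le)
    calc ENNReal.ofReal u ≤ ENNReal.ofReal (distFun μ W (c + 1 / (n + 1))) :=
          ENNReal.ofReal_le_ofReal this
      _ = μ (W ⁻¹' Iic (c + 1 / (n + 1))) := by
          rw [distFun, ENNReal.ofReal_toReal (measure_ne_top _ _)]
  have hanti : Antitone (fun n : ℕ => W ⁻¹' Iic (c + 1 / (n + 1))) := by
    intro i j hij
    refine preimage_mono (Iic_subset_Iic.2 ?_)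
    have : (1 : ℝ) / (j + 1) ≤ 1 / (i + 1) := by
      apply one_div_le_one_div_of_le (by positivity)
      exact_mod_cast by omega
    linarith
  have hI : (⋂ n : ℕ, W ⁻¹' Iic (c + 1 / (n + 1))) = W ⁻¹' Iic c := by
    ext ω
    simp only [mem_iInter, mem_preimage, mem_Iic]
    constructor
    · intro h
      have : Filter.Tendsto (fun n : ℕ => c + 1 / ((n : ℝ) + 1)) Filter.atTop (nhds (c + 0)) :=
        Filter.Tendsto.const_add _ tendsto_one_div_add_atTop_nhds_zero_nat
      rw [add_zero] at this
      exact ge_of_tendsto this (Filter.Eventually.of_forall h)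
    · intro h n
      have : (0:ℝ) < 1 / (n + 1) := by positivity
      linarith
  have htend := tendsto_measure_iInter_atTop (μ := μ)
    (fun n => (hW measurableSet_Iic).nullMeasurableSet) hanti ⟨0, measure_ne_top _ _⟩
  rw [hI] at htend
  have : ENNReal.ofReal u ≤ μ (W ⁻¹' Iic c) :=
    ge_of_tendsto htend (Filter.Eventually.of_forall key)
  rw [distFun]
  exact (ENNReal.ofReal_le_iff_le_toReal (measure_ne_top _ _)).mp this

end DistAux

section Envelope

variable {a b : ℝ} {f : ℝ → ℝ}

lemma le_sInfImage (hab : a < b) (hf : MonotoneOn f (Ioo a b)) {u : ℝ} (hu : u ∈ Ioo a b) :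
    f u ≤ sInf (f '' Ioo u b) := by
  refine le_csInf ?_ ?_
  · exact ⟨f ((u + b) / 2), mem_image_of_mem f ⟨by linarith [hu.2], by linarith [hu.2]⟩⟩
  · rintro y ⟨s, hs, rfl⟩
    exact hf hu ⟨lt_trans hu.1 hs.1, hs.2⟩ hs.1.le

lemma sInfImage_le (hf0 : ∀ u ∈ Ioo a b, 0 ≤ f u) {u r : ℝ} (hu : a < u) (hr : r ∈ Ioo u b) :
    sInf (f '' Ioo u b) ≤ f r := by
  refine csInf_le ⟨0, ?_⟩ (mem_image_of_mem f hr)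
  rintro y ⟨s, hs, rfl⟩
  exact hf0 s ⟨lt_trans hu hs.1, hs.2⟩

lemma sInfImage_nonneg (hf0 : ∀ u ∈ Ioo a b, 0 ≤ f u) {u : ℝ} (hu : u ∈ Ioo a b) :
    0 ≤ sInf (f '' Ioo u b) := by
  refine le_csInf ⟨f ((u + b) / 2),
    mem_image_of_mem f ⟨by linarith [hu.2], by linarith [hu.2]⟩⟩ ?_
  rintro y ⟨s, hs, rfl⟩
  exact hf0 s ⟨lt_trans hu.1 hs.1, hs.2⟩

lemma sInfImage_monotoneOn (hf0 : ∀ u ∈ Ioo a b, 0 ≤ f u) :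
    MonotoneOn (fun u => sInf (f '' Ioo u b)) (Ioo a b) := by
  intro u hu v hv huv
  refine csInf_le_csInf ?_ ?_ ?_
  · refine ⟨0, ?_⟩
    rintro y ⟨s, hs, rfl⟩
    exact hf0 s ⟨lt_trans hu.1 hs.1, hs.2⟩
  · exact ⟨f ((v + b) / 2), mem_image_of_mem f ⟨by linarith [hv.2], by linarith [hv.2]⟩⟩
  · exact image_mono (Ioo_subset_Ioo huv le_rfl)

lemma countable_ne_sInfImage (hab : a < b) (hf : MonotoneOn f (Ioo a b))
    (hf0 : ∀ u ∈ Ioo a b, 0 ≤ f u) :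
    {u | u ∈ Ioo a b ∧ f u ≠ sInf (f '' Ioo u b)}.Countable := by
  have hsub : {u | u ∈ Ioo a b ∧ f u ≠ sInf (f '' Ioo u b)} ⊆
      ⋃ ρ : ℚ, {u | u ∈ Ioo a b ∧ f u < (ρ : ℝ) ∧ (ρ : ℝ) < sInf (f '' Ioo u b)} := by
    rintro u ⟨hu, hne⟩
    have hlt : f u < sInf (f '' Ioo u b) := lt_of_le_of_ne (le_sInfImage hab hf hu) hne
    obtain ⟨ρ, h1, h2⟩ := exists_rat_btwn hlt
    exact mem_iUnion.2 ⟨ρ, hu, h1, h2⟩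
  refine Set.Countable.mono hsub (countable_iUnion fun ρ => Set.Subsingleton.countable ?_)
  intro u hu v hv
  by_contra hne
  rcases lt_or_gt_of_ne hne with h | h
  · -- u < v : ρ < sInf (f '' Ioo u b) ≤ f ((u+v)/2) ≤ f v < ρ
    have h1 : sInf (f '' Ioo u b) ≤ f ((u + v) / 2) :=
      sInfImage_le hf0 hu.1.1 ⟨by linarith, by linarith [hv.1.2]⟩
    have h2 : f ((u + v) / 2) ≤ f v :=
      hf ⟨by linarith [hu.1.1], by linarith [hv.1.2]⟩ hv.1 (by linarith)
    linarith [hu.2.2, hv.2.1]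
  · have h1 : sInf (f '' Ioo v b) ≤ f ((v + u) / 2) :=
      sInfImage_le hf0 hv.1.1 ⟨by linarith, by linarith [hu.1.2]⟩
    have h2 : f ((v + u) / 2) ≤ f u :=
      hf ⟨by linarith [hv.1.1], by linarith [hu.1.2]⟩ hu.1 (by linarith)
    linarith [hv.2.2, hu.2.1]

/-- Approximate right-continuity of the envelope. -/
lemma exists_sInfImage_lt (hf0 : ∀ u ∈ Ioo a b, 0 ≤ f u) {u : ℝ} (hu : u ∈ Ioo a b)
    {ε : ℝ} (hε : 0 < ε) :
    ∃ r : ℚ, (r : ℝ) ∈ Ioo u b ∧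
      sInf (f '' Ioo (r : ℝ) b) ≤ sInf (f '' Ioo u b) + ε := by
  have hne : (f '' Ioo u b).Nonempty :=
    ⟨f ((u + b) / 2), mem_image_of_mem f ⟨by linarith [hu.2], by linarith [hu.2]⟩⟩
  have hlt : sInf (f '' Ioo u b) < sInf (f '' Ioo u b) + ε := by linarith
  obtain ⟨y, ⟨s, hs, rfl⟩, hy⟩ := exists_lt_of_csInf_lt hne hlt
  obtain ⟨r, hr1, hr2⟩ := exists_rat_btwn hs.1
  refine ⟨r, ⟨hr1, lt_trans hr2 hs.2⟩, ?_⟩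
  have : sInf (f '' Ioo (r : ℝ) b) ≤ f s :=
    sInfImage_le hf0 (lt_trans hu.1 hr1) ⟨hr2, hs.2⟩
  linarith

end Envelope

section Layer

variable {Ω : Type*} [mΩ : MeasurableSpace Ω] (μ : Measure Ω) [IsProbabilityMeasure μ]

/-- If `f` on `(α,1)` is a "generalized quantile-type" function for the distribution of `W`,
then it is integrable on `(α,1)` provided `W` is integrable. -/
lemma integrableOn_of_quantile_like {a : ℝ} (ha : 0 < a) (ha1 : a < 1)
    {W : Ω → ℝ} (hW : Measurable W) (hWint : Integrable W μ) (hW0 : ∀ ω, 0 ≤ W ω)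
    {f : ℝ → ℝ} (hfm : MonotoneOn f (Ioo a 1)) (hf0 : ∀ u ∈ Ioo a 1, 0 ≤ f u)
    (hP : ∀ u ∈ Ioo a 1, ∀ t : ℝ, t < f u → distFun μ W t ≤ u) :
    IntegrableOn f (Ioo a 1) (volume : Measure ℝ) := by
  have hmeas : AEMeasurable f ((volume : Measure ℝ).restrict (Ioo a 1)) :=
    aemeasurable_restrict_of_monotoneOn measurableSet_Ioo hfm
  have hae0 : 0 ≤ᵐ[(volume : Measure ℝ).restrict (Ioo a 1)] f :=
    (ae_restrict_iff' measurableSet_Ioo).2 (Filter.Eventually.of_forall hf0)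
  constructor
  · exact hmeas.aestronglyMeasurable
  · rw [hasFiniteIntegral_iff_ofReal hae0]
    rw [lintegral_eq_lintegral_meas_lt _ hae0 hmeas]
    have hbound : ∀ t ∈ Ioi (0:ℝ),
        ((volume : Measure ℝ).restrict (Ioo a 1)) {u : ℝ | t < f u} ≤ μ {ω | t < W ω} := by
      intro t ht
      rw [Measure.restrict_apply' measurableSet_Ioo]
      have hsub : {u : ℝ | t < f u} ∩ Ioo a 1 ⊆ Icc (distFun μ W t) 1 := by
        rintro u ⟨hu1, hu2⟩
        exact ⟨hP u hu2 t hu1, hu2.2.le⟩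
      calc (volume : Measure ℝ) ({u : ℝ | t < f u} ∩ Ioo a 1)
          ≤ (volume : Measure ℝ) (Icc (distFun μ W t) 1) := measure_mono hsub
        _ = ENNReal.ofReal (1 - distFun μ W t) := by rw [Real.volume_Icc]
        _ ≤ μ {ω | t < W ω} := by
            have hcompl : {ω | t < W ω} = (W ⁻¹' Iic t)ᶜ := by
              ext ω; simp [not_le]
            rw [hcompl, measure_compl (hW measurableSet_Iic) (measure_ne_top _ _), measure_univ]
            rw [distFun, ← ENNReal.toReal_one, ← ENNReal.toReal_sub_of_le prob_le_one ENNReal.one_ne_top]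
            rw [ENNReal.ofReal_toReal]
            exact ((tsub_le_self).trans_lt (lt_top_iff_ne_top.2 ENNReal.one_ne_top)).ne
      done
    calc ∫⁻ t in Ioi (0:ℝ), ((volume : Measure ℝ).restrict (Ioo a 1)) {u : ℝ | t < f u}
        ≤ ∫⁻ t in Ioi (0:ℝ), μ {ω | t < W ω} := by
          refine lintegral_mono_ae ?_
          exact (ae_restrict_iff' measurableSet_Ioi).2 (Filter.Eventually.of_forall hbound)
      _ = ∫⁻ ω, ENNReal.ofReal (W ω) ∂μ := by
          rw [lintegral_eq_lintegral_meas_lt μ (Filter.Eventually.of_forall hW0) hW.aemeasurable]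
      _ < ⊤ := hWint.lintegral_lt_top

end Layer


section Core

variable {Ω : Type*} {m : MeasurableSpace Ω} [mΩ : MeasurableSpace Ω] [StandardBorelSpace Ω]
  [Nonempty Ω] (μ : Measure Ω) [IsProbabilityMeasure μ]

/-- If `B` is in the σ-algebra generated by a random variable independent of `m`, then the
conditional kernel gives it constant mass `μ B`, a.e. -/
lemma condExpKernel_indep_const (hm : m ≤ mΩ) {W : Ω → ℝ} (hW : Measurable W)
    (hind : Indep (MeasurableSpace.comap W Real.measurableSpace) m μ)
    {C : Set ℝ} (hC : MeasurableSet C) :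
    (fun ω => ((condExpKernel μ m ω) (W ⁻¹' C)).toReal)
      =ᵐ[μ] fun _ => (μ (W ⁻¹' C)).toReal := by
  have hBm : MeasurableSet[MeasurableSpace.comap W Real.measurableSpace] (W ⁻¹' C) :=
    ⟨C, hC, rfl⟩
  have hB : MeasurableSet (W ⁻¹' C) := hW hC
  have h1 := condExpKernel_ae_eq_condExp (μ := μ) hm hB
  have h2 : μ[(W ⁻¹' C).indicator (fun _ => (1:ℝ)) | m]
      =ᵐ[μ] fun _ => ∫ ω, (W ⁻¹' C).indicator (fun _ => (1:ℝ)) ω ∂μ := by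
    refine condExp_indep_eq hW.comap_le hm ?_ hind
    exact (stronglyMeasurable_const (β := ℝ)).indicator hBm
  have h3 : ∫ ω, (W ⁻¹' C).indicator (fun _ => (1:ℝ)) ω ∂μ = (μ (W ⁻¹' C)).toReal := by
    rw [integral_indicator_const (1:ℝ) hB, smul_eq_mul, mul_one]
    rfl
  refine h1.trans (h2.trans ?_)
  rw [h3]

/-- Core a.e. bound for conditional VaR via an independent event and an
`m`-measurable dominating function. -/
lemma condVaR_le_of (hm : m ≤ mΩ) {X Y M : Ω → ℝ} (hXY : ∀ᵐ ω ∂μ, X ω ≤ Y ω)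
    {B : Set Ω}
    (hkB : (fun ω => ((condExpKernel μ m ω) B).toReal) =ᵐ[μ] fun _ => (μ B).toReal)
    (hMm : Measurable[m] M) (hM0 : ∀ ω, 0 ≤ M ω) (hYM : ∀ ω ∈ B, Y ω ≤ M ω) :
    ∀ᵐ ω ∂μ, ∀ u : ℝ, u ≤ (μ B).toReal → condVaR m μ u X ω ≤ M ω := by
  -- the null set where X > Y
  set N : Set Ω := toMeasurable μ {ω | ¬ X ω ≤ Y ω} with hN
  have hNnull : μ N = 0 := by
    rw [hN, measure_toMeasurable]
    exact hXY
  have hNmeas : MeasurableSet N := measurableSet_toMeasurable μ _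
  -- kernel of N is a.e. zero
  have hkN : ∀ᵐ ω ∂μ, (condExpKernel μ m ω) N = 0 := by
    have h1 := condExpKernel_ae_eq_condExp (μ := μ) hm hNmeas
    have h2 : μ[N.indicator (fun _ => (1:ℝ)) | m] =ᵐ[μ] μ[(fun _ => (0:ℝ)) | m] := by
      refine condExp_congr_ae ?_
      have : ∀ᵐ ω ∂μ, ω ∉ N := by
        rw [ae_iff]
        simpa using hNnull
      filter_upwards [this] with ω hω
      simp [Set.indicator_of_notMem hω]
    have h3 : μ[(fun _ => (0:ℝ)) | m] =ᵐ[μ] fun _ => (0:ℝ) := by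
      rw [condExp_const hm]
    filter_upwards [h1.trans (h2.trans h3)] with ω hω
    have hfin : (condExpKernel μ m ω) N ≠ ⊤ := measure_ne_top _ _
    rcases (ENNReal.toReal_eq_zero_iff _).mp hω with h | h
    · exact h
    · exact absurd h hfin
  -- kernel of m-measurable sets {M ≤ q} is the indicator
  have hkS : ∀ q : ℚ, ∀ᵐ ω ∂μ,
      ((condExpKernel μ m ω) {ω' | M ω' ≤ (q:ℝ)}).toReal
        = ({ω' | M ω' ≤ (q:ℝ)}).indicator (fun _ => (1:ℝ)) ω := by
    intro q
    have hSm : MeasurableSet[m] {ω' | M ω' ≤ (q:ℝ)} := hMm measurableSet_Iic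
    have h1 := condExpKernel_ae_eq_condExp (μ := μ) hm (hm _ hSm)
    have h2 : μ[({ω' | M ω' ≤ (q:ℝ)}).indicator (fun _ => (1:ℝ)) | m]
        = ({ω' | M ω' ≤ (q:ℝ)}).indicator (fun _ => (1:ℝ)) := by
      refine condExp_of_stronglyMeasurable hm ?_ ?_
      · exact (stronglyMeasurable_const (β := ℝ)).indicator hSm
      · exact (integrable_const (1:ℝ)).indicator (hm _ hSm)
    rw [h2] at h1
    exact h1
  filter_upwards [hkN, hkB, ae_all_iff.2 hkS] with ω hωN hωB hωS
  intro u hu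
  haveI : IsProbabilityMeasure ((condExpKernel μ m) ω) := inferInstance
  -- main claim: every rational above M ω is in the defining set
  have key : ∀ q : ℚ, M ω ≤ (q:ℝ) → u ≤ ((condExpKernel μ m ω) (X ⁻¹' Iic (q:ℝ))).toReal := by
    intro q hq
    set S : Set Ω := {ω' | M ω' ≤ (q:ℝ)}
    have hS1 : ((condExpKernel μ m ω) S).toReal = 1 := by
      rw [hωS q, Set.indicator_of_mem (by exact hq : ω ∈ S)]
    have hS1' : (condExpKernel μ m ω) S = 1 := (ENNReal.toReal_eq_one_iff _).mp hS1
    have hSc : (condExpKernel μ m ω) Sᶜ = 0 := by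
      have hSmeas : MeasurableSet S := hm _ (hMm measurableSet_Iic)
      rw [prob_compl_eq_zero_iff hSmeas]
      exact hS1'
    have hsub : B \ (Sᶜ ∪ N) ⊆ X ⁻¹' Iic (q:ℝ) := by
      rintro ω' ⟨hB', hn⟩
      rw [mem_union] at hn
      push_neg at hn
      have h1 : X ω' ≤ Y ω' := by
        by_contra hc
        exact hn.2 (subset_toMeasurable μ _ hc)
      have h2 : M ω' ≤ (q:ℝ) := not_not.mp (fun hc => hn.1 hc)
      exact le_trans h1 (le_trans (hYM ω' hB') h2)
    have hzero : (condExpKernel μ m ω) (Sᶜ ∪ N) = 0 :=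
      measure_union_null hSc hωN
    have hgeB : (condExpKernel μ m ω) B ≤ (condExpKernel μ m ω) (X ⁻¹' Iic (q:ℝ)) := by
      calc (condExpKernel μ m ω) B = (condExpKernel μ m ω) (B \ (Sᶜ ∪ N)) :=
            (measure_diff_null hzero).symm
        _ ≤ _ := measure_mono hsub
    calc u ≤ (μ B).toReal := hu
      _ = ((condExpKernel μ m ω) B).toReal := hωB.symm
      _ ≤ ((condExpKernel μ m ω) (X ⁻¹' Iic (q:ℝ))).toReal :=
          ENNReal.toReal_mono (measure_ne_top _ _) hgeB
  -- conclude via sInf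
  rw [condVaR]
  by_cases hbdd : BddBelow {m' : ℝ | u ≤ ((condExpKernel μ m ω) (X ⁻¹' Iic m')).toReal}
  · by_contra hlt
    push_neg at hlt
    obtain ⟨q, hq1, hq2⟩ := exists_rat_btwn hlt
    have hqmem : (q:ℝ) ∈ {m' : ℝ | u ≤ ((condExpKernel μ m ω) (X ⁻¹' Iic m')).toReal} :=
      key q hq1.le
    exact absurd (csInf_le hbdd hqmem) (not_le.mpr hq2)
  · rw [Real.sInf_of_not_bddBelow hbdd]
    exact hM0 ω

end Core

/-- Jensen upper bound for the time-consistent Average Value-at-Risk of the terminal GARCH(1,1)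
loss: `ÃVaR^α_t(L_T) ≤ κ √(a₀ Σ_{k=0}^{T-t-2} (a₁ κ₂ + b)^k + σ_{t+1}² (a₁ κ₂ + b)^{T-t-1})`
with `κ = (1/(1−α)) ∫_α^1 F_Z^{-1}(u) du` and `κ₂ = (1/(1−α)) ∫_α^1 F_{Z²}^{-1}(u) du`. -/
theorem timeConsistent_AVaR_upper_bound {Ω : Type*} [mΩ : MeasurableSpace Ω]
    [StandardBorelSpace Ω] [Nonempty Ω] (μ : Measure Ω) [IsProbabilityMeasure μ]
    (ℱ : ℕ → MeasurableSpace Ω) (hℱ : ∀ t, ℱ t ≤ mΩ) (hmonoℱ : Monotone ℱ)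
    (T : ℕ) (a₀ a₁ b : ℝ) (ha₀ : 0 < a₀) (ha₁ : 0 < a₁) (hb : 0 < b)
    (L σ Z : ℕ → Ω → ℝ)
    -- GARCH(1,1) dynamics
    (hL : ∀ t, 1 ≤ t → t ≤ T → ∀ ω, L t ω = σ t ω * Z t ω)
    (hσrec : ∀ t, 1 ≤ t → t ≤ T → ∀ ω,
      σ t ω ^ 2 = a₀ + a₁ * L (t - 1) ω ^ 2 + b * σ (t - 1) ω ^ 2)
    (hσmeas : ∀ t, Measurable[ℱ t] (σ (t + 1))) (hσpos : ∀ t ω, 0 < σ t ω)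
    (hZmeas : ∀ t, Measurable (Z t))
    -- innovations independent of the past
    (hindep : ∀ t, Indep (MeasurableSpace.comap (Z (t + 1)) Real.measurableSpace) (ℱ t) μ)
    -- identically distributed, symmetric innovations with nice distribution function
    (hident : ∀ t, 1 ≤ t → t ≤ T → μ.map (Z t) = μ.map (Z 1))
    (hsym : μ.map (Z 1) = μ.map (fun ω => -(Z 1 ω)))
    (hmono : StrictMono (distFun μ (Z 1))) (hcont : Continuous (distFun μ (Z 1)))
    (α : ℝ) (hα : α ∈ Set.Ioo (0 : ℝ) 1) (hqpos : 0 < quantileFun (distFun μ (Z 1)) α)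
    (hZ2int : Integrable (fun ω => Z 1 ω ^ 2) μ)
    -- time-consistent AVaR defined by backward recursion
    (AV : ℕ → (Ω → ℝ) → Ω → ℝ)
    (hAVT : ∀ X : Ω → ℝ, AV T X = X)
    (hAVrec : ∀ t, t < T → ∀ X : Ω → ℝ, ∀ ω,
      AV t X ω = (1 - α)⁻¹ * ∫ u in α..(1 : ℝ), condVaR (ℱ t) μ u (AV (t + 1) X) ω)
    (κ κ₂ : ℝ)
    (hκ : κ = (1 - α)⁻¹ * ∫ u in α..(1 : ℝ), quantileFun (distFun μ (Z 1)) u)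
    (hκ₂ : κ₂ = (1 - α)⁻¹ * ∫ u in α..(1 : ℝ), quantileFun (distFun μ (fun ω => Z 1 ω ^ 2)) u) :
    ∀ t, t < T → ∀ᵐ ω ∂μ,
      AV t (L T) ω
        ≤ κ * Real.sqrt (a₀ * ∑ k ∈ Finset.range (T - t - 1), (a₁ * κ₂ + b) ^ k
            + σ (t + 1) ω ^ 2 * (a₁ * κ₂ + b) ^ (T - t - 1)) := by
  obtain ⟨hα0, hα1⟩ := hα
  have h1α : (0:ℝ) < 1 - α := by linarith
  -- abbreviations
  set F1 : ℝ → ℝ := distFun μ (Z 1) with hF1def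
  set F2 : ℝ → ℝ := distFun μ (fun ω => Z 1 ω ^ 2) with hF2def
  set q1 : ℝ → ℝ := quantileFun F1 with hq1def
  set q2 : ℝ → ℝ := quantileFun F2 with hq2def
  have hZ2meas : Measurable (fun ω => Z 1 ω ^ 2) := (hZmeas 1).pow_const 2
  -- basic facts about q1
  have hS1bdd : BddBelow {x : ℝ | α ≤ F1 x} := by
    by_contra h
    rw [hq1def, quantileFun, Real.sInf_of_not_bddBelow h] at hqpos
    exact lt_irrefl 0 hqpos
  have hS1bdd' : ∀ u : ℝ, α ≤ u → BddBelow {x : ℝ | u ≤ F1 x} :=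
    fun u hu => hS1bdd.mono (fun x hx => le_trans hu hx)
  have hS1ne : ∀ u : ℝ, u < 1 → {x : ℝ | u ≤ F1 x}.Nonempty := by
    intro u hu
    obtain ⟨x, hx⟩ := exists_le_distFun μ (Z 1) hu
    exact ⟨x, hx⟩
  have hq1_ge : ∀ u : ℝ, α ≤ u → u < 1 → q1 α ≤ q1 u := by
    intro u h1 h2
    exact csInf_le_csInf hS1bdd (hS1ne u h2) (fun x hx => le_trans h1 hx)
  have hq1pos : ∀ u : ℝ, α ≤ u → u < 1 → 0 < q1 u :=
    fun u h1 h2 => lt_of_lt_of_le hqpos (hq1_ge u h1 h2)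
  have hq1nonnegIoo : ∀ u ∈ Ioo α (1:ℝ), 0 ≤ q1 u :=
    fun u hu => (hq1pos u hu.1.le hu.2).le
  have hq1mono : MonotoneOn q1 (Ioo α 1) := by
    intro u hu v hv huv
    exact csInf_le_csInf (hS1bdd' u hu.1.le) (hS1ne v hv.2) (fun x hx => le_trans huv hx)
  -- basic facts about q2
  have hF2zero : ∀ x : ℝ, x < 0 → F2 x = 0 := by
    intro x hx
    have : (fun ω => Z 1 ω ^ 2) ⁻¹' Iic x = ∅ := by
      ext ω; simp only [mem_preimage, mem_Iic, mem_empty_iff_false, iff_false, not_le]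
      exact lt_of_lt_of_le hx (sq_nonneg _)
    rw [hF2def, distFun, this, measure_empty, ENNReal.toReal_zero]
  have hS2sub : ∀ u : ℝ, 0 < u → {x : ℝ | u ≤ F2 x} ⊆ Ici 0 := by
    intro u hu x hx
    by_contra h
    have hxneg : x < 0 := by simpa using h
    have hx' : u ≤ F2 x := hx
    rw [hF2zero x hxneg] at hx'
    exact absurd (lt_of_lt_of_le hu hx') (lt_irrefl 0)
  have hS2bdd : ∀ u : ℝ, 0 < u → BddBelow {x : ℝ | u ≤ F2 x} :=
    fun u hu => ⟨0, fun x hx => hS2sub u hu hx⟩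
  have hS2ne : ∀ u : ℝ, u < 1 → {x : ℝ | u ≤ F2 x}.Nonempty := by
    intro u hu
    obtain ⟨x, hx⟩ := exists_le_distFun μ (fun ω => Z 1 ω ^ 2) hu
    exact ⟨x, hx⟩
  have hq2nonneg : ∀ u : ℝ, 0 < u → 0 ≤ q2 u := by
    intro u hu
    by_cases hne : {x : ℝ | u ≤ F2 x}.Nonempty
    · exact le_csInf hne (fun x hx => hS2sub u hu hx)
    · rw [hq2def, quantileFun, Set.not_nonempty_iff_eq_empty.mp hne, Real.sInf_empty]
  have hq2nonnegIoo : ∀ u ∈ Ioo α (1:ℝ), 0 ≤ q2 u := fun u hu => hq2nonneg u (lt_trans hα0 hu.1)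
  have hq2mono : MonotoneOn q2 (Ioo α 1) := by
    intro u hu v hv huv
    exact csInf_le_csInf (hS2bdd u (lt_trans hα0 hu.1)) (hS2ne v hv.2)
      (fun x hx => le_trans huv hx)
  -- q1 u ^ 2 ≤ q2 u  and  q1 u ≤ 1 + q2 u
  have hq12 : ∀ u ∈ Ioo α (1:ℝ), q1 u ^ 2 ≤ q2 u := by
    intro u hu
    refine le_csInf (hS2ne u hu.2) ?_
    intro x hx
    have hx0 : 0 ≤ x := hS2sub u (lt_trans hα0 hu.1) hx
    have hsub : (fun ω => Z 1 ω ^ 2) ⁻¹' Iic x ⊆ Z 1 ⁻¹' Iic (Real.sqrt x) := by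
      intro ω hω
      simp only [mem_preimage, mem_Iic] at hω ⊢
      calc Z 1 ω ≤ |Z 1 ω| := le_abs_self _
        _ = Real.sqrt (Z 1 ω ^ 2) := (Real.sqrt_sq_eq_abs _).symm
        _ ≤ Real.sqrt x := Real.sqrt_le_sqrt hω
    have hF : u ≤ F1 (Real.sqrt x) := by
      refine le_trans hx ?_
      rw [hF1def, hF2def, distFun, distFun]
      exact ENNReal.toReal_mono (measure_ne_top _ _) (measure_mono hsub)
    have h1 : q1 u ≤ Real.sqrt x := csInf_le (hS1bdd' u hu.1.le) hF
    calc q1 u ^ 2 ≤ Real.sqrt x ^ 2 := by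
          have h0 : 0 ≤ q1 u := hq1nonnegIoo u hu
          nlinarith
      _ = x := Real.sq_sqrt hx0
  have hq1le : ∀ u ∈ Ioo α (1:ℝ), q1 u ≤ 1 + q2 u := by
    intro u hu
    rcases le_or_gt (q1 u) 1 with h | h
    · linarith [hq2nonnegIoo u hu]
    · nlinarith [hq12 u hu]
  -- quantile property
  have hF1q1 : ∀ u ∈ Ioo α (1:ℝ), u ≤ F1 (q1 u) := by
    intro u hu
    exact le_distFun_quantileFun μ (Z 1) (hZmeas 1) (hS1ne u hu.2) (hS1bdd' u hu.1.le)
  have hF2q2 : ∀ u ∈ Ioo α (1:ℝ), u ≤ F2 (q2 u) := by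
    intro u hu
    exact le_distFun_quantileFun μ (fun ω => Z 1 ω ^ 2) hZ2meas (hS2ne u hu.2)
      (hS2bdd u (lt_trans hα0 hu.1))
  -- envelope facts
  have hF1mono : Monotone F1 := distFun_mono μ (Z 1)
  have hF2mono : Monotone F2 := distFun_mono μ (fun ω => Z 1 ω ^ 2)
  have hF1qb1 : ∀ u ∈ Ioo α (1:ℝ), u ≤ F1 (sInf (q1 '' Ioo u 1)) :=
    fun u hu => le_trans (hF1q1 u hu) (hF1mono (le_sInfImage hα1 hq1mono hu))
  have hF2qb2 : ∀ u ∈ Ioo α (1:ℝ), u ≤ F2 (sInf (q2 '' Ioo u 1)) :=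
    fun u hu => le_trans (hF2q2 u hu) (hF2mono (le_sInfImage hα1 hq2mono hu))
  have hqb1nonneg : ∀ u ∈ Ioo α (1:ℝ), 0 ≤ sInf (q1 '' Ioo u 1) :=
    fun u hu => sInfImage_nonneg hq1nonnegIoo hu
  have hqb2nonneg : ∀ u ∈ Ioo α (1:ℝ), 0 ≤ sInf (q2 '' Ioo u 1) :=
    fun u hu => sInfImage_nonneg hq2nonnegIoo hu
  -- integrability of q2 and the envelopes
  have hq2int : IntegrableOn q2 (Ioo α 1) (volume : Measure ℝ) := by
    refine integrableOn_of_quantile_like μ hα0 hα1 hZ2meas hZ2int (fun ω => sq_nonneg _)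
      hq2mono hq2nonnegIoo ?_
    intro u hu t ht
    by_contra hc
    push_neg at hc
    exact absurd (csInf_le (hS2bdd u (lt_trans hα0 hu.1)) hc.le) (not_le.mpr ht)
  have hqb2int : IntegrableOn (fun u => sInf (q2 '' Ioo u 1)) (Ioo α 1) (volume : Measure ℝ) := by
    refine integrableOn_of_quantile_like μ hα0 hα1 hZ2meas hZ2int (fun ω => sq_nonneg _)
      (sInfImage_monotoneOn hq2nonnegIoo) hqb2nonneg ?_
    intro u hu t ht
    by_contra hc
    push_neg at hc
    set r : ℝ := min ((u + 1) / 2) (F2 t) with hrdef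
    have hr1 : u < r := lt_min (by linarith [hu.2]) hc
    have hr2 : r < 1 := lt_of_le_of_lt (min_le_left _ _) (by linarith [hu.2])
    have hq2r : q2 r ≤ t := csInf_le (hS2bdd r (lt_trans (lt_trans hα0 hu.1) hr1))
      (min_le_right _ _ : r ≤ F2 t)
    have : sInf (q2 '' Ioo u 1) ≤ q2 r :=
      sInfImage_le hq2nonnegIoo hu.1 ⟨hr1, hr2⟩
    linarith
  have hqb1int : IntegrableOn (fun u => sInf (q1 '' Ioo u 1)) (Ioo α 1) (volume : Measure ℝ) := by
    have hbound : ∀ u ∈ Ioo α (1:ℝ), sInf (q1 '' Ioo u 1) ≤ 1 + sInf (q2 '' Ioo u 1) := by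
      intro u hu
      have h2 : sInf (q1 '' Ioo u 1) - 1 ≤ sInf (q2 '' Ioo u 1) := by
        refine le_csInf ⟨q2 ((u+1)/2),
          mem_image_of_mem q2 ⟨by linarith [hu.2], by linarith [hu.2]⟩⟩ ?_
        rintro y ⟨s, hs, rfl⟩
        have hsIoo : s ∈ Ioo α (1:ℝ) := ⟨lt_trans hu.1 hs.1, hs.2⟩
        have := sInfImage_le hq1nonnegIoo hu.1 hs
        linarith [hq1le s hsIoo]
      linarith
    refine Integrable.mono' ((integrable_const (1:ℝ)).add hqb2int) ?_ ?_
    · exact (aemeasurable_restrict_of_monotoneOn measurableSet_Ioo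
        (sInfImage_monotoneOn hq1nonnegIoo)).aestronglyMeasurable
    · rw [ae_restrict_iff' measurableSet_Ioo]
      refine Filter.Eventually.of_forall (fun u hu => ?_)
      rw [Real.norm_eq_abs, abs_of_nonneg (hqb1nonneg u hu)]
      exact hbound u hu
  -- interval integrability
  have hqb1II : IntervalIntegrable (fun u => sInf (q1 '' Ioo u 1)) volume α 1 :=
    (intervalIntegrable_iff_integrableOn_Ioo_of_le hα1.le).2 hqb1int
  have hqb2II : IntervalIntegrable (fun u => sInf (q2 '' Ioo u 1)) volume α 1 :=
    (intervalIntegrable_iff_integrableOn_Ioo_of_le hα1.le).2 hqb2int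
  -- a.e. equality of quantile and envelope, and the resulting integral identities
  have hcongr : ∀ f : ℝ → ℝ, MonotoneOn f (Ioo α 1) → (∀ u ∈ Ioo α (1:ℝ), 0 ≤ f u) →
      (∫ u in α..(1:ℝ), sInf (f '' Ioo u 1)) = ∫ u in α..(1:ℝ), f u := by
    intro f hfm hf0
    refine intervalIntegral.integral_congr_ae ?_
    have hsub : {x : ℝ | ¬(x ∈ Set.uIoc α (1:ℝ) → sInf (f '' Ioo x 1) = f x)}
        ⊆ {u | u ∈ Ioo α 1 ∧ f u ≠ sInf (f '' Ioo u 1)} ∪ {1} := by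
      intro x hx
      simp only [mem_setOf_eq, _root_.not_imp] at hx
      obtain ⟨hxI, hxne⟩ := hx
      rw [Set.uIoc_of_le hα1.le] at hxI
      rcases eq_or_lt_of_le hxI.2 with h | h
      · exact Or.inr (by simp [h])
      · exact Or.inl ⟨⟨hxI.1, h⟩, fun hc => hxne hc.symm⟩
    have hnull : (volume : Measure ℝ) {x : ℝ | ¬(x ∈ Set.uIoc α (1:ℝ) → sInf (f '' Ioo x 1) = f x)} = 0 :=
      measure_mono_null hsub
        (Set.Countable.measure_zero
          ((countable_ne_sInfImage hα1 hfm hf0).union (Set.countable_singleton 1)) _)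
    rw [ae_iff]
    exact hnull
  have hIq1 : (∫ u in α..(1:ℝ), q1 u) = (1 - α) * κ := by
    rw [hκ]; field_simp
  have hIq2 : (∫ u in α..(1:ℝ), q2 u) = (1 - α) * κ₂ := by
    rw [hκ₂]; field_simp
  have hIqb1 : (∫ u in α..(1:ℝ), sInf (q1 '' Ioo u 1)) = (1 - α) * κ :=
    (hcongr q1 hq1mono hq1nonnegIoo).trans hIq1
  have hIqb2 : (∫ u in α..(1:ℝ), sInf (q2 '' Ioo u 1)) = (1 - α) * κ₂ :=
    (hcongr q2 hq2mono hq2nonnegIoo).trans hIq2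
  -- nonnegativity of κ and κ₂
  have hq1nonneg : ∀ u : ℝ, α ≤ u → 0 ≤ q1 u := by
    intro u hu
    by_cases hne : {x : ℝ | u ≤ F1 x}.Nonempty
    · refine le_csInf hne (fun x hx => ?_)
      exact le_trans hqpos.le (csInf_le hS1bdd (le_trans hu hx))
    · rw [hq1def, quantileFun, Set.not_nonempty_iff_eq_empty.mp hne, Real.sInf_empty]
  have hκ0 : 0 ≤ κ := by
    rw [hκ]
    exact mul_nonneg (inv_nonneg.mpr h1α.le)
      (intervalIntegral.integral_nonneg hα1.le (fun u hu => hq1nonneg u hu.1))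
  have hκ₂0 : 0 ≤ κ₂ := by
    rw [hκ₂]
    exact mul_nonneg (inv_nonneg.mpr h1α.le)
      (intervalIntegral.integral_nonneg hα1.le
        (fun u hu => hq2nonneg u (lt_of_lt_of_le hα0 hu.1)))
  have hcc : 0 < a₁ * κ₂ + b := by nlinarith
  -- transfer of distributions
  have htrans : ∀ s : ℕ, 1 ≤ s → s ≤ T → ∀ C : Set ℝ, MeasurableSet C →
      μ (Z s ⁻¹' C) = μ (Z 1 ⁻¹' C) := by
    intro s h1 h2 C hC
    rw [← Measure.map_apply (hZmeas s) hC, hident s h1 h2, Measure.map_apply (hZmeas 1) hC]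
  have haeIcc : ∀ᵐ x ∂((volume : Measure ℝ).restrict (Icc α 1)), x ∈ Ioo α (1:ℝ) := by
    rw [ae_iff, Measure.restrict_apply' measurableSet_Icc]
    refine measure_mono_null (fun x hx => ?_)
      (Set.Countable.measure_zero ((Set.countable_singleton (1:ℝ)).insert α) _)
    obtain ⟨hnot, hIcc⟩ := hx
    rw [← Icc_diff_Ioo_same hα1.le]
    exact ⟨hIcc, hnot⟩
  -- the main induction (downward in time, on n = T - t - 1)
  have main : ∀ n : ℕ, ∀ t : ℕ, t + (n + 1) = T →
      ∀ᵐ ω ∂μ, AV t (L T) ω ≤ κ * Real.sqrt (a₀ * ∑ k ∈ Finset.range n, (a₁ * κ₂ + b) ^ k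
          + σ (t + 1) ω ^ 2 * (a₁ * κ₂ + b) ^ n) := by
    intro n
    induction n with
    | zero =>
      intro t hT
      have hTT : T = t + 1 := by omega
      subst hTT
      have Hr : ∀ r : ℚ, ∀ᵐ ω ∂μ, ((r:ℝ) ∈ Ioo α 1) →
          ∀ u : ℝ, u ≤ (r:ℝ) →
            condVaR (ℱ t) μ u (L (t+1)) ω ≤ σ (t+1) ω * sInf (q1 '' Ioo (r:ℝ) 1) := by
        intro r
        by_cases hr : (r:ℝ) ∈ Ioo α 1
        · have hkB := condExpKernel_indep_const μ (hℱ t) (hZmeas (t+1)) (hindep t)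
            (measurableSet_Iic (a := sInf (q1 '' Ioo (r:ℝ) 1)))
          have hμB : (r:ℝ) ≤ (μ (Z (t+1) ⁻¹' Iic (sInf (q1 '' Ioo (r:ℝ) 1)))).toReal := by
            rw [htrans (t+1) (by omega) (by omega) _ measurableSet_Iic]
            exact hF1qb1 r hr
          have hcore := condVaR_le_of μ (hℱ t)
            (X := L (t+1)) (Y := L (t+1))
            (M := fun ω => σ (t+1) ω * sInf (q1 '' Ioo (r:ℝ) 1))
            (B := Z (t+1) ⁻¹' Iic (sInf (q1 '' Ioo (r:ℝ) 1)))
            (Filter.Eventually.of_forall (fun ω => le_rfl)) hkB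
            ((hσmeas t).mul_const _)
            (fun ω => mul_nonneg (hσpos (t+1) ω).le (hqb1nonneg r hr))
            (fun ω hω => by
              rw [hL (t+1) (by omega) (by omega) ω]
              exact mul_le_mul_of_nonneg_left hω (hσpos (t+1) ω).le)
          filter_upwards [hcore] with ω hω hrm u hu
          exact hω u (le_trans hu hμB)
        · exact Filter.Eventually.of_forall (fun ω hr' => absurd hr' hr)
      have hAV1 : AV (t+1) (L (t+1)) = L (t+1) := hAVT (L (t+1))
      filter_upwards [ae_all_iff.2 Hr] with ω hω
      have hσp := hσpos (t+1) ω
      have hcv : ∀ u ∈ Ioo α (1:ℝ),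
          condVaR (ℱ t) μ u (L (t+1)) ω ≤ σ (t+1) ω * sInf (q1 '' Ioo u 1) := by
        intro u hu
        refine le_of_forall_pos_le_add (fun ε hε => ?_)
        have hε' : 0 < ε / σ (t+1) ω := div_pos hε hσp
        obtain ⟨r, hrI, hrle⟩ := exists_sInfImage_lt hq1nonnegIoo hu hε'
        have hrIoo : (r:ℝ) ∈ Ioo α 1 := ⟨lt_trans hu.1 hrI.1, hrI.2⟩
        have h1 := hω r hrIoo u hrI.1.le
        have h2 : σ (t+1) ω * sInf (q1 '' Ioo (r:ℝ) 1)
            ≤ σ (t+1) ω * (sInf (q1 '' Ioo u 1) + ε / σ (t+1) ω) :=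
          mul_le_mul_of_nonneg_left hrle hσp.le
        have h3 : σ (t+1) ω * (sInf (q1 '' Ioo u 1) + ε / σ (t+1) ω)
            = σ (t+1) ω * sInf (q1 '' Ioo u 1) + ε := by
          field_simp
        linarith
      rw [hAVrec t (by omega) (L (t+1)) ω, hAV1]
      simp only [Finset.range_zero, Finset.sum_empty, mul_zero, pow_zero, mul_one, zero_add]
      rw [Real.sqrt_sq hσp.le]
      by_cases hii : IntervalIntegrable (fun u => condVaR (ℱ t) μ u (L (t+1)) ω) volume α 1
      · have hle := intervalIntegral.integral_mono_ae_restrict hα1.le hii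
          (hqb1II.const_mul (σ (t+1) ω)) (haeIcc.mono (fun x hx => hcv x hx))
        have hval : (∫ u in α..(1:ℝ), σ (t+1) ω * sInf (q1 '' Ioo u 1))
            = σ (t+1) ω * ((1-α) * κ) := by
          rw [intervalIntegral.integral_const_mul, hIqb1]
        calc (1-α)⁻¹ * ∫ u in α..(1:ℝ), condVaR (ℱ t) μ u (L (t+1)) ω
            ≤ (1-α)⁻¹ * (σ (t+1) ω * ((1-α) * κ)) := by
              refine mul_le_mul_of_nonneg_left ?_ (inv_nonneg.mpr h1α.le)
              rw [← hval]; exact hle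
          _ = κ * σ (t+1) ω := by field_simp
      · rw [intervalIntegral.integral_undef hii, mul_zero]
        exact mul_nonneg hκ0 hσp.le
    | succ n IH =>
      intro t hT
      have htT : t < T := by omega
      have hIH := IH (t+1) (by omega)
      set cc : ℝ := a₁ * κ₂ + b with hccdef
      have hcc : 0 < cc := hcc
      have hSn0 : (0:ℝ) ≤ ∑ k ∈ Finset.range n, cc ^ k :=
        Finset.sum_nonneg (fun k _ => (pow_pos hcc k).le)
      have hccn : (0:ℝ) < cc ^ n := pow_pos hcc n
      set D : Ω → ℝ := fun ω =>
        a₀ * ∑ k ∈ Finset.range n, cc ^ k + (a₀ + b * σ (t+1) ω ^ 2) * cc ^ n with hDdef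
      set E : Ω → ℝ := fun ω => a₁ * σ (t+1) ω ^ 2 * cc ^ n with hEdef
      have hDpos : ∀ ω, 0 < D ω := by
        intro ω
        simp only [hDdef]
        have h1 := sq_nonneg (σ (t+1) ω)
        have h2 : 0 < (a₀ + b * σ (t+1) ω ^ 2) * cc ^ n :=
          mul_pos (by nlinarith) hccn
        nlinarith [mul_nonneg ha₀.le hSn0]
      have hEpos : ∀ ω, 0 < E ω := by
        intro ω
        rw [hEdef]
        exact mul_pos (mul_pos ha₁ (pow_pos (hσpos (t+1) ω) 2)) hccn
      have hσ2 : ∀ ω, σ (t+1+1) ω ^ 2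
          = a₀ + a₁ * (σ (t+1) ω * Z (t+1) ω) ^ 2 + b * σ (t+1) ω ^ 2 := by
        intro ω
        have h1 := hσrec (t+1+1) (by omega) (by omega) ω
        rw [show t+1+1-1 = t+1 by omega] at h1
        rw [hL (t+1) (by omega) (by omega) ω] at h1
        exact h1
      have Hr : ∀ r : ℚ, ∀ᵐ ω ∂μ, ((r:ℝ) ∈ Ioo α 1) → ∀ u : ℝ, u ≤ (r:ℝ) →
          condVaR (ℱ t) μ u (AV (t+1) (L T)) ω
            ≤ κ * Real.sqrt (D ω + E ω * sInf (q2 '' Ioo (r:ℝ) 1)) := by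
        intro r
        by_cases hr : (r:ℝ) ∈ Ioo α 1
        · set C : Set ℝ := {z : ℝ | z^2 ≤ sInf (q2 '' Ioo (r:ℝ) 1)} with hCdef
          have hCmeas : MeasurableSet C := by
            have hCe : C = (fun z : ℝ => z^2) ⁻¹' Iic (sInf (q2 '' Ioo (r:ℝ) 1)) := rfl
            rw [hCe]
            exact (measurable_id.pow_const 2) measurableSet_Iic
          have hkB := condExpKernel_indep_const μ (hℱ t) (hZmeas (t+1)) (hindep t) hCmeas
          have hμB : (r:ℝ) ≤ (μ (Z (t+1) ⁻¹' C)).toReal := by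
            rw [htrans (t+1) (by omega) (by omega) C hCmeas]
            have hpre : Z 1 ⁻¹' C
                = (fun ω => Z 1 ω ^ 2) ⁻¹' Iic (sInf (q2 '' Ioo (r:ℝ) 1)) := rfl
            rw [hpre]
            exact hF2qb2 r hr
          have hσm : Measurable[ℱ t] (fun ω => σ (t+1) ω ^ 2) := (hσmeas t).pow_const 2
          have hDm : Measurable[ℱ t] D := by
            rw [hDdef]
            exact (((hσm.const_mul b).const_add a₀).mul_const (cc ^ n)).const_add _
          have hEm : Measurable[ℱ t] E := by
            rw [hEdef]
            exact (hσm.const_mul a₁).mul_const (cc ^ n)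
          have hMm : Measurable[ℱ t]
              (fun ω => κ * Real.sqrt (D ω + E ω * sInf (q2 '' Ioo (r:ℝ) 1))) := by
            refine Measurable.const_mul ?_ κ
            exact Real.continuous_sqrt.measurable.comp (hDm.add (hEm.mul_const _))
          have hYM : ∀ ω ∈ Z (t+1) ⁻¹' C,
              κ * Real.sqrt (a₀ * ∑ k ∈ Finset.range n, cc ^ k + σ (t+1+1) ω ^ 2 * cc ^ n)
                ≤ κ * Real.sqrt (D ω + E ω * sInf (q2 '' Ioo (r:ℝ) 1)) := by
            intro ω hω
            have hz : Z (t+1) ω ^ 2 ≤ sInf (q2 '' Ioo (r:ℝ) 1) := hω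
            have hinner : a₀ * ∑ k ∈ Finset.range n, cc ^ k + σ (t+1+1) ω ^ 2 * cc ^ n
                ≤ D ω + E ω * sInf (q2 '' Ioo (r:ℝ) 1) := by
              simp only [hσ2 ω, hDdef, hEdef]
              have h0 : 0 ≤ a₁ * σ (t+1) ω ^ 2 * cc ^ n := by positivity
              have hkey := mul_le_mul_of_nonneg_left hz h0
              nlinarith [hkey]
            exact mul_le_mul_of_nonneg_left (Real.sqrt_le_sqrt hinner) hκ0
          have hcore := condVaR_le_of μ (hℱ t) (X := AV (t+1) (L T))
            (Y := fun ω => κ * Real.sqrt (a₀ * ∑ k ∈ Finset.range n, cc ^ k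
              + σ (t+1+1) ω ^ 2 * cc ^ n))
            (M := fun ω => κ * Real.sqrt (D ω + E ω * sInf (q2 '' Ioo (r:ℝ) 1)))
            (B := Z (t+1) ⁻¹' C) hIH hkB hMm
            (fun ω => mul_nonneg hκ0 (Real.sqrt_nonneg _)) hYM
          filter_upwards [hcore] with ω hω hrm u hu
          exact hω u (le_trans hu hμB)
        · exact Filter.Eventually.of_forall (fun ω hr' => absurd hr' hr)
      filter_upwards [ae_all_iff.2 Hr] with ω hω
      have hDo : 0 < D ω := hDpos ω
      have hEo : 0 < E ω := hEpos ω
      have hcv : ∀ u ∈ Ioo α (1:ℝ), condVaR (ℱ t) μ u (AV (t+1) (L T)) ω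
          ≤ κ * Real.sqrt (D ω + E ω * sInf (q2 '' Ioo u 1)) := by
        intro u hu
        refine le_of_forall_pos_le_add (fun ε hε => ?_)
        have hδ : 0 < (ε / (κ + 1))^2 / E ω := by positivity
        obtain ⟨r, hrI, hrle⟩ := exists_sInfImage_lt hq2nonnegIoo hu hδ
        have hrIoo : (r:ℝ) ∈ Ioo α 1 := ⟨lt_trans hu.1 hrI.1, hrI.2⟩
        have h1 := hω r hrIoo u hrI.1.le
        have hx0 : 0 ≤ D ω + E ω * sInf (q2 '' Ioo u 1) :=
          add_nonneg hDo.le (mul_nonneg hEo.le (hqb2nonneg u hu))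
        have h2 : D ω + E ω * sInf (q2 '' Ioo (r:ℝ) 1)
            ≤ (D ω + E ω * sInf (q2 '' Ioo u 1)) + E ω * ((ε / (κ + 1))^2 / E ω) := by
          have key := mul_le_mul_of_nonneg_left hrle hEo.le
          rw [mul_add] at key
          linarith
        have hEδ : E ω * ((ε / (κ + 1))^2 / E ω) = (ε/(κ+1))^2 := by
          rw [mul_comm]
          exact div_mul_cancel₀ _ (ne_of_gt hEo)
        have h3 : Real.sqrt (D ω + E ω * sInf (q2 '' Ioo (r:ℝ) 1))
            ≤ Real.sqrt (D ω + E ω * sInf (q2 '' Ioo u 1)) + ε/(κ+1) := by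
          refine le_trans (Real.sqrt_le_sqrt h2) ?_
          refine le_trans (mySqrt_add_le hx0 (by positivity)) ?_
          rw [hEδ, Real.sqrt_sq (by positivity)]
        have h6 : κ * (ε/(κ+1)) ≤ ε := by
          rw [mul_div_assoc']
          rw [div_le_iff₀ (by linarith)]
          nlinarith
        calc condVaR (ℱ t) μ u (AV (t+1) (L T)) ω
            ≤ κ * Real.sqrt (D ω + E ω * sInf (q2 '' Ioo (r:ℝ) 1)) := h1
          _ ≤ κ * (Real.sqrt (D ω + E ω * sInf (q2 '' Ioo u 1)) + ε/(κ+1)) :=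
              mul_le_mul_of_nonneg_left h3 hκ0
          _ ≤ κ * Real.sqrt (D ω + E ω * sInf (q2 '' Ioo u 1)) + ε := by
              rw [mul_add]; linarith
      rw [hAVrec t htT (L T) ω]
      set cstar : ℝ := D ω + E ω * κ₂ with hcstar
      have hcstarpos : 0 < cstar := by
        rw [hcstar]
        nlinarith [mul_nonneg hEo.le hκ₂0]
      have hsqrtpos : 0 < Real.sqrt cstar := Real.sqrt_pos.2 hcstarpos
      have hgoalRHS : κ * Real.sqrt cstar
          = κ * Real.sqrt (a₀ * ∑ k ∈ Finset.range (n+1), cc ^ k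
              + σ (t + 1) ω ^ 2 * cc ^ (n+1)) := by
        rw [hcstar, hDdef, hEdef]
        congr 2
        rw [Finset.sum_range_succ, pow_succ]
        ring
      by_cases hii : IntervalIntegrable
          (fun u => condVaR (ℱ t) μ u (AV (t+1) (L T)) ω) volume α 1
      · set A1 : ℝ := κ / (2 * Real.sqrt cstar) * (cstar + D ω) with hA1
        set B1 : ℝ := κ * E ω / (2 * Real.sqrt cstar) with hB1
        have htangent : ∀ u ∈ Ioo α (1:ℝ),
            κ * Real.sqrt (D ω + E ω * sInf (q2 '' Ioo u 1))
              ≤ A1 + B1 * sInf (q2 '' Ioo u 1) := by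
          intro u hu
          have hx0 : 0 ≤ D ω + E ω * sInf (q2 '' Ioo u 1) :=
            add_nonneg hDo.le (mul_nonneg hEo.le (hqb2nonneg u hu))
          have h1 := mySqrt_tangent hx0 hcstarpos
          calc κ * Real.sqrt (D ω + E ω * sInf (q2 '' Ioo u 1))
              ≤ κ * ((cstar + (D ω + E ω * sInf (q2 '' Ioo u 1))) / (2 * Real.sqrt cstar)) :=
                mul_le_mul_of_nonneg_left h1 hκ0
            _ = A1 + B1 * sInf (q2 '' Ioo u 1) := by
                rw [hA1, hB1]
                field_simp
                ring
        have hM'mono : MonotoneOn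
            (fun u => κ * Real.sqrt (D ω + E ω * sInf (q2 '' Ioo u 1))) (Ioo α 1) := by
          intro u hu v hv huv
          refine mul_le_mul_of_nonneg_left (Real.sqrt_le_sqrt ?_) hκ0
          have := sInfImage_monotoneOn hq2nonnegIoo hu hv huv
          nlinarith [mul_le_mul_of_nonneg_left this hEo.le]
        have hM'int : IntegrableOn
            (fun u => κ * Real.sqrt (D ω + E ω * sInf (q2 '' Ioo u 1))) (Ioo α 1)
            (volume : Measure ℝ) := by
          refine Integrable.mono' (g := fun u => A1 + B1 * sInf (q2 '' Ioo u 1)) ?_ ?_ ?_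
          · exact ((integrableOn_const measure_Ioo_lt_top.ne).add
              (hqb2int.const_mul B1))
          · exact (aemeasurable_restrict_of_monotoneOn measurableSet_Ioo
              hM'mono).aestronglyMeasurable
          · rw [ae_restrict_iff' measurableSet_Ioo]
            refine Filter.Eventually.of_forall (fun u hu => ?_)
            rw [Real.norm_eq_abs,
              abs_of_nonneg (mul_nonneg hκ0 (Real.sqrt_nonneg _))]
            exact htangent u hu
        have hM'II : IntervalIntegrable
            (fun u => κ * Real.sqrt (D ω + E ω * sInf (q2 '' Ioo u 1))) volume α 1 :=
          (intervalIntegrable_iff_integrableOn_Ioo_of_le hα1.le).2 hM'int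
        have hRHSII : IntervalIntegrable
            (fun u => A1 + B1 * sInf (q2 '' Ioo u 1)) volume α 1 :=
          intervalIntegrable_const.add (hqb2II.const_mul B1)
        have hle1 := intervalIntegral.integral_mono_ae_restrict hα1.le hii hM'II
          (haeIcc.mono (fun x hx => hcv x hx))
        have hle2 := intervalIntegral.integral_mono_ae_restrict hα1.le hM'II hRHSII
          (haeIcc.mono (fun x hx => htangent x hx))
        have hval : (∫ u in α..(1:ℝ), (A1 + B1 * sInf (q2 '' Ioo u 1)))
            = (1-α) * A1 + B1 * ((1-α) * κ₂) := by
          rw [intervalIntegral.integral_add intervalIntegrable_const (hqb2II.const_mul B1),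
            intervalIntegral.integral_const, intervalIntegral.integral_const_mul, hIqb2]
          simp [smul_eq_mul]
        have halg : A1 + B1 * κ₂ = κ * Real.sqrt cstar := by
          have key : cstar + D ω + E ω * κ₂ = 2 * cstar := by rw [hcstar]; ring
          calc A1 + B1 * κ₂
              = κ * (cstar + D ω + E ω * κ₂) / (2 * Real.sqrt cstar) := by
                rw [hA1, hB1]; ring
            _ = κ * (2 * cstar) / (2 * Real.sqrt cstar) := by rw [key]
            _ = κ * (cstar / Real.sqrt cstar) := by ring
            _ = κ * Real.sqrt cstar := by rw [Real.div_sqrt]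
        have hfinal : (1-α) * A1 + B1 * ((1-α) * κ₂) = (1-α) * (κ * Real.sqrt cstar) := by
          rw [← halg]; ring
        calc (1-α)⁻¹ * ∫ u in α..(1:ℝ), condVaR (ℱ t) μ u (AV (t+1) (L T)) ω
            ≤ (1-α)⁻¹ * ((1-α) * (κ * Real.sqrt cstar)) := by
              refine mul_le_mul_of_nonneg_left ?_ (inv_nonneg.mpr h1α.le)
              rw [← hfinal, ← hval]
              exact le_trans hle1 hle2
          _ = κ * Real.sqrt cstar := by field_simp
          _ = _ := hgoalRHS
      · rw [intervalIntegral.integral_undef hii, mul_zero]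
        exact mul_nonneg hκ0 (Real.sqrt_nonneg _)
  intro t ht
  have hfin := main (T - t - 1) t (by omega)
  exact hfin
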